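/- For every integer k ≥ 1, lcm(1, 2, ..., k) ≥ 2^{k-1}. -/

import Mathlib

/-- The key fact: `(n+1) * C(n,i) = (n+1-i) * C(n+1,i)`. -/
lemma keyF (n i : ℕ) :
    (n + 1) * n.choose i = (n + 1 - i) * (n + 1).choose i := by
  have h1 := Nat.add_one_mul_choose_eq n i
  have h2 := Nat.choose_succ_right_eq (n + 1) i
  rw [h1, h2, mul_comm]

/-- The algebraic identity `a3 * a2 = a3 * a1 + a1 * a2` with
`a1 = (n+1)*C(n,i)`, `a2 = (n+2)*C(n+1,i)`, `a3 = (n+2)*C(n+1,i+1)`. -/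
lemma keyIdent (n i : ℕ) (h : i ≤ n) :
    ((n + 2) * (n + 1).choose (i + 1)) * ((n + 2) * (n + 1).choose i) =
      ((n + 2) * (n + 1).choose (i + 1)) * ((n + 1) * n.choose i) +
      ((n + 1) * n.choose i) * ((n + 2) * (n + 1).choose i) := by
  obtain ⟨m, hm⟩ : ∃ m, n + 1 - i = m + 1 := ⟨n - i, by omega⟩
  have hF : (n + 1) * n.choose i = (m + 1) * (n + 1).choose i := by
    rw [keyF n i, hm]
  have hF2 : (n + 2) * (n + 1).choose (i + 1) = (m + 1) * (n + 2).choose (i + 1) := by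
    have h3 := keyF (n + 1) (i + 1)
    rw [h3]; congr 1; omega
  have hP : (n + 2).choose (i + 1) = (n + 1).choose i + (n + 1).choose (i + 1) :=
    Nat.choose_succ_succ (n + 1) i
  have zr : (n + 1).choose (i + 1) * (i + 1) = (n + 1).choose i * (m + 1) := by
    rw [Nat.choose_succ_right_eq, hm]
  have hn2 : n + 2 = i + m + 2 := by omega
  rw [hF, hF2, hP, hn2]
  have zr' : ((n + 1).choose (i + 1) : ℤ) * (i + 1) = ((n + 1).choose i : ℤ) * (m + 1) := by
    exact_mod_cast zr
  zify
  linear_combination (((m : ℤ) + 1) * ((n + 1).choose i : ℤ)) * zr'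

lemma lcm_pos (k : ℕ) : 0 < (Finset.Icc 1 k).lcm id := by
  rcases Nat.eq_zero_or_pos ((Finset.Icc 1 k).lcm id) with h | h
  · rw [Finset.lcm_eq_zero_iff] at h
    obtain ⟨x, hx, hx0⟩ := h
    simp only [Finset.mem_Icc] at hx
    simp only [id] at hx0
    omega
  · exact h

/-- `(n+1) * C(n,i) ∣ lcm(1..n+1)` for `i ≤ n`. -/
lemma key_dvd : ∀ n : ℕ, ∀ i ≤ n, (n + 1) * n.choose i ∣ (Finset.Icc 1 (n + 1)).lcm id := by
  intro n
  induction n with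
  | zero => intro i hi; interval_cases i; simpa using Finset.dvd_lcm (f := id) (s := Finset.Icc 1 1) (b := 1) (by simp)
  | succ n ihn =>
    intro i hi
    induction i with
    | zero =>
      simpa using Finset.dvd_lcm (f := id) (s := Finset.Icc 1 (n + 2)) (b := n + 2) (by simp)
    | succ i ihi =>
      have hin : i ≤ n := by omega
      set L := (Finset.Icc 1 (n + 2)).lcm id with hL
      have hLpos : 0 < L := lcm_pos (n + 2)
      have ha1 : (n + 1) * n.choose i ∣ L := by
        refine (ihn i hin).trans (Finset.lcm_mono ?_)
        intro x hx; simp only [Finset.mem_Icc] at *; omega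
      have ha2 : (n + 2) * (n + 1).choose i ∣ L := ihi (by omega)
      set a1 := (n + 1) * n.choose i with ha1d
      set a2 := (n + 2) * (n + 1).choose i with ha2d
      set a3 := (n + 2) * (n + 1).choose (i + 1) with ha3d
      have hid : a3 * a2 = a3 * a1 + a1 * a2 := keyIdent n i hin
      obtain ⟨x1, hx1⟩ := ha1
      obtain ⟨x2, hx2⟩ := ha2
      have ha1p : 0 < a1 := Nat.mul_pos (by omega) (Nat.choose_pos hin)
      have ha2p : 0 < a2 := Nat.mul_pos (by omega) (Nat.choose_pos (by omega))
      have : (a3 : ℤ) ∣ (L : ℤ) := by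
        refine ⟨(x1 : ℤ) - x2, ?_⟩
        have h1 : (a1 : ℤ) * x1 = L := by exact_mod_cast hx1.symm
        have h2 : (a2 : ℤ) * x2 = L := by exact_mod_cast hx2.symm
        have hidz : (a3 : ℤ) * a2 = a3 * a1 + a1 * a2 := by exact_mod_cast hid
        have hne : (a1 : ℤ) * a2 ≠ 0 := by positivity
        refine mul_left_cancel₀ hne ?_
        linear_combination (-(a3 : ℤ) * a2) * h1 + ((a3 : ℤ) * a1) * h2 - (L : ℤ) * hidz
      exact_mod_cast this

theorem stmt_5 (k : ℕ) (hk : 1 ≤ k) :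
    2 ^ (k - 1) ≤ (Finset.Icc 1 k).lcm id := by
  obtain ⟨n, rfl⟩ : ∃ n, k = n + 1 := ⟨k - 1, by omega⟩
  simp only [Nat.add_sub_cancel]
  have hdvd := key_dvd n (n / 2) (Nat.div_le_self n 2)
  have hpos := lcm_pos (n + 1)
  have hle : (2 : ℕ) ^ n ≤ (n + 1) * n.choose (n / 2) := by
    calc (2 : ℕ) ^ n = ∑ m ∈ Finset.range (n + 1), n.choose m := (Nat.sum_range_choose n).symm
      _ ≤ ∑ m ∈ Finset.range (n + 1), n.choose (n / 2) :=
          Finset.sum_le_sum fun i _ => Nat.choose_le_middle i n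
      _ = (n + 1) * n.choose (n / 2) := by simp [Finset.sum_const, mul_comm]
  exact hle.trans (Nat.le_of_dvd hpos hdvd)
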